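/- Every prefix of an optimal arrangement is optimal: if π is an arrangement of k-mers minimizing the total number of charged (w+k)-windows over all arrangements with the same underlying set U, then for every t ≤ |π|, the prefix π[1..t] minimizes the number of charged windows over all arrangements with underlying set {π[1],…,π[t]}. -/

import Mathlib

/-- The k-mer of the string l starting at position i (0-based). -/
def kmerAt {σ : ℕ} (k : ℕ) (l : List (Fin σ)) (i : ℕ) : List (Fin σ) :=
  (l.drop i).take k

/-- u is the π-minimal k-mer of the window l (k-mers outside π count as larger). -/
def MinIs {σ : ℕ} (k w : ℕ) (π : List (List (Fin σ))) (l : List (Fin σ))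
    (u : List (Fin σ)) : Prop :=
  (∃ i ≤ w, kmerAt k l i = u) ∧ u ∈ π ∧
  ∀ j ≤ w, kmerAt k l j ∈ π → π.idxOf u ≤ π.idxOf (kmerAt k l j)

/-- The window l is charged by the arrangement π: its π-minimal k-mer is the prefix
or the unique suffix of l. -/
def ChargedBy {σ : ℕ} (k w : ℕ) (π : List (List (Fin σ))) (l : List (Fin σ)) : Prop :=
  ∃ u, MinIs k w π l u ∧
    (kmerAt k l 0 = u ∨ (kmerAt k l w = u ∧ ∀ j < w, kmerAt k l j ≠ u))

/-- ch(π): the number of (w+k)-windows charged by π. -/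
noncomputable def chCount (σ k w : ℕ) (π : List (List (Fin σ))) : ℕ :=
  Nat.card {l : List (Fin σ) // l.length = w + k ∧ ChargedBy k w π l}


section IdxAux
variable {α : Type*} [BEq α] [LawfulBEq α]

lemma idx_append_of_mem {a : α} {l1 : List α} (l2 : List α) (h : a ∈ l1) :
    (l1 ++ l2).idxOf a = l1.idxOf a := by
  induction l1 with
  | nil => simp at h
  | cons b t ih =>
    rw [List.cons_append, List.idxOf_cons, List.idxOf_cons]
    cases hb : b == a with
    | true => simp
    | false =>
      simp only [cond_false]
      have ha : a ∈ t := by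
        rcases List.mem_cons.mp h with rfl | h' 
        · simp at hb
        · exact h'
      rw [ih ha]

lemma idx_append_of_not_mem {a : α} {l1 : List α} (l2 : List α) (h : a ∉ l1) :
    (l1 ++ l2).idxOf a = l1.length + l2.idxOf a := by
  induction l1 with
  | nil => simp
  | cons b t ih =>
    have hb : (b == a) = false := by
      apply beq_eq_false_iff_ne.mpr
      intro hba; exact h (hba ▸ List.mem_cons_self)
    rw [List.cons_append, List.idxOf_cons, hb, cond_false,
      ih (fun h' => h (List.mem_cons_of_mem _ h')), List.length_cons]
    omega

lemma idx_lt_length {a : α} {l : List α} (h : a ∈ l) : l.idxOf a < l.length := by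
  induction l with
  | nil => simp at h
  | cons b t ih =>
    rw [List.idxOf_cons, List.length_cons]
    cases hb : b == a with
    | true => simp
    | false =>
      simp only [cond_false]
      have ha : a ∈ t := by
        rcases List.mem_cons.mp h with rfl | h'
        · simp at hb
        · exact h'
      have := ih ha; omega

end IdxAux

/-- A window is "tail-charged": none of its k-mers lie in π1 and it is charged by π2. -/
def TailCharged {σ : ℕ} (k w : ℕ) (π1 π2 : List (List (Fin σ))) (l : List (Fin σ)) : Prop :=
  (∀ j ≤ w, kmerAt k l j ∉ π1) ∧ ChargedBy k w π2 l

lemma chargedBy_append_iff {σ : ℕ} {k w : ℕ} {π1 π2 : List (List (Fin σ))}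
    (hnd : (π1 ++ π2).Nodup) (l : List (Fin σ)) :
    ChargedBy k w (π1 ++ π2) l ↔ ChargedBy k w π1 l ∨ TailCharged k w π1 π2 l := by
  obtain ⟨-, -, hdisj⟩ := List.nodup_append.mp hnd
  constructor
  · rintro ⟨u, ⟨⟨i, hi, hki⟩, hu, hmin⟩, hcond⟩
    rcases List.mem_append.mp hu with hu1 | hu2
    · left
      refine ⟨u, ⟨⟨i, hi, hki⟩, hu1, fun j hj hjmem => ?_⟩, hcond⟩
      have := hmin j hj (List.mem_append_left _ hjmem)
      rwa [idx_append_of_mem _ hu1, idx_append_of_mem _ hjmem] at this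
    · right
      have hu1 : u ∉ π1 := fun h => hdisj _ h _ hu2 rfl
      have hnot : ∀ j ≤ w, kmerAt k l j ∉ π1 := by
        intro j hj hjmem
        have h1 := hmin j hj (List.mem_append_left _ hjmem)
        rw [idx_append_of_mem _ hjmem, idx_append_of_not_mem _ hu1] at h1
        have h2 : π1.idxOf (kmerAt k l j) < π1.length := idx_lt_length hjmem
        omega
      refine ⟨hnot, u, ⟨⟨i, hi, hki⟩, hu2, fun j hj hjmem => ?_⟩, hcond⟩
      have := hmin j hj (List.mem_append_right _ hjmem)
      rw [idx_append_of_not_mem _ hu1, idx_append_of_not_mem _ (hnot j hj)] at this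
      omega
  · rintro (⟨u, ⟨⟨i, hi, hki⟩, hu, hmin⟩, hcond⟩ | ⟨hnot, u, ⟨⟨i, hi, hki⟩, hu, hmin⟩, hcond⟩)
    · refine ⟨u, ⟨⟨i, hi, hki⟩, List.mem_append_left _ hu, fun j hj hjmem => ?_⟩, hcond⟩
      rcases List.mem_append.mp hjmem with h1 | h2
      · rw [idx_append_of_mem _ hu, idx_append_of_mem _ h1]
        exact hmin j hj h1
      · have hj1 : kmerAt k l j ∉ π1 := fun h => hdisj _ h _ h2 rfl
        rw [idx_append_of_mem _ hu, idx_append_of_not_mem _ hj1]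
        have : π1.idxOf u < π1.length := idx_lt_length hu
        omega
    · have hu1 : u ∉ π1 := by
        have := hnot i hi
        rwa [hki] at this
      refine ⟨u, ⟨⟨i, hi, hki⟩, List.mem_append_right _ hu, fun j hj hjmem => ?_⟩, hcond⟩
      have hj1 : kmerAt k l j ∉ π1 := hnot j hj
      have hj2 : kmerAt k l j ∈ π2 := (List.mem_append.mp hjmem).resolve_left hj1
      rw [idx_append_of_not_mem _ hu1, idx_append_of_not_mem _ hj1]
      have := hmin j hj hj2
      omega

lemma chargedBy_not_tail {σ : ℕ} {k w : ℕ} {π1 π2 : List (List (Fin σ))}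
    {l : List (Fin σ)} (h1 : ChargedBy k w π1 l) : ¬ TailCharged k w π1 π2 l := by
  rintro ⟨hnot, -⟩
  obtain ⟨u, ⟨⟨i, hi, hki⟩, hu, -⟩, -⟩ := h1
  exact hnot i hi (hki ▸ hu)

lemma chCount_append {σ k w : ℕ} {π1 π2 : List (List (Fin σ))}
    (hnd : (π1 ++ π2).Nodup) :
    chCount σ k w (π1 ++ π2) = chCount σ k w π1 +
      Nat.card {l : List (Fin σ) // l.length = w + k ∧ TailCharged k w π1 π2 l} := by
  have hfin : {l : List (Fin σ) | l.length = w + k}.Finite := List.finite_length_eq _ _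
  have hB : {l : List (Fin σ) | l.length = w + k ∧ ChargedBy k w π1 l}.Finite :=
    hfin.subset fun l hl => hl.1
  have hC : {l : List (Fin σ) | l.length = w + k ∧ TailCharged k w π1 π2 l}.Finite :=
    hfin.subset fun l hl => hl.1
  have hun : {l : List (Fin σ) | l.length = w + k ∧ ChargedBy k w (π1 ++ π2) l} =
      {l : List (Fin σ) | l.length = w + k ∧ ChargedBy k w π1 l} ∪
      {l : List (Fin σ) | l.length = w + k ∧ TailCharged k w π1 π2 l} := by
    ext l
    simp only [Set.mem_setOf_eq, Set.mem_union, chargedBy_append_iff hnd, and_or_left]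
  have hdisj : Disjoint {l : List (Fin σ) | l.length = w + k ∧ ChargedBy k w π1 l}
      {l : List (Fin σ) | l.length = w + k ∧ TailCharged k w π1 π2 l} := by
    rw [Set.disjoint_left]
    rintro l ⟨-, h1⟩ ⟨-, h2⟩
    exact chargedBy_not_tail h1 h2
  have := Set.ncard_union_eq hdisj hB hC
  calc chCount σ k w (π1 ++ π2)
      = {l : List (Fin σ) | l.length = w + k ∧ ChargedBy k w (π1 ++ π2) l}.ncard :=
        Nat.card_coe_set_eq _
    _ = _ := by
        rw [hun, this, ← Nat.card_coe_set_eq, ← Nat.card_coe_set_eq]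
        rfl

lemma tailCharged_perm {σ k w : ℕ} {π1 π1' : List (List (Fin σ))}
    (hp : List.Perm π1 π1') (π2 : List (List (Fin σ))) (l : List (Fin σ)) :
    TailCharged k w π1 π2 l ↔ TailCharged k w π1' π2 l := by
  unfold TailCharged
  constructor
  · rintro ⟨h1, h2⟩; exact ⟨fun j hj hm => h1 j hj (hp.mem_iff.mpr hm), h2⟩
  · rintro ⟨h1, h2⟩; exact ⟨fun j hj hm => h1 j hj (hp.mem_iff.mp hm), h2⟩

/-- Every prefix of an optimal arrangement is optimal: if π minimizes the number of
charged windows among all arrangements of its underlying set, then each prefix π[1..t]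
minimizes it among all arrangements of its own underlying set. -/
theorem stmt16 (σ k w : ℕ) (hσ : 2 ≤ σ) (hk : 2 ≤ k) (hw : 2 ≤ w)
    (π : List (List (Fin σ))) (hnd : π.Nodup) (hall : ∀ u ∈ π, u.length = k)
    (hopt : ∀ π', List.Perm π' π → chCount σ k w π ≤ chCount σ k w π') :
    ∀ t ≤ π.length, ∀ τ, List.Perm τ (π.take t) →
      chCount σ k w (π.take t) ≤ chCount σ k w τ := by
  intro t ht τ hperm
  have htd : π.take t ++ π.drop t = π := List.take_append_drop t π
  have hperm2 : List.Perm (τ ++ π.drop t) π := by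
    have := hperm.append_right (π.drop t); rwa [htd] at this
  have hnd1 : (π.take t ++ π.drop t).Nodup := by rwa [htd]
  have hnd2 : (τ ++ π.drop t).Nodup := hperm2.symm.nodup hnd
  have e1 : chCount σ k w π = chCount σ k w (π.take t) +
      Nat.card {l : List (Fin σ) // l.length = w + k ∧ TailCharged k w (π.take t) (π.drop t) l} := by
    conv_lhs => rw [← htd]
    exact chCount_append hnd1
  have e2 : chCount σ k w (τ ++ π.drop t) = chCount σ k w τ +
      Nat.card {l : List (Fin σ) // l.length = w + k ∧ TailCharged k w τ (π.drop t) l} := by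
    exact chCount_append hnd2
  have ecard : Nat.card {l : List (Fin σ) // l.length = w + k ∧ TailCharged k w (π.take t) (π.drop t) l}
      = Nat.card {l : List (Fin σ) // l.length = w + k ∧ TailCharged k w τ (π.drop t) l} := by
    apply Nat.card_congr
    apply Equiv.subtypeEquivRight
    intro l
    rw [tailCharged_perm hperm.symm (π.drop t) l]
  have hle := hopt (τ ++ π.drop t) hperm2
  rw [e1, e2, ecard] at hle
  omega
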